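/- Let a ∈ (0,1] and let S ⊆ Lim(ω₁) be stationary with S = S₁ ∪ S₂. If ♣_S^{inf≥a} holds, then ♣_{S₁}^{inf≥a} holds or ♣_{S₂}^{inf≥a} holds (where the principle for a non-stationary index set is taken to fail). -/

import Mathlib

open Filter Set

noncomputable def omega1 : Ordinal.{0} := (Cardinal.aleph 1).ord

/-- The set of countable limit ordinals, `Lim(ω₁)`. -/
def limOmega1 : Set Ordinal.{0} := {δ | δ < omega1 ∧ Order.IsSuccLimit δ}

/-- `C` is a closed unbounded subset of `ω₁`. -/
def IsClubIn (C : Set Ordinal.{0}) : Prop :=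
  C ⊆ Set.Iio omega1 ∧
  (∀ δ, δ < omega1 → Order.IsSuccLimit δ → (∀ β < δ, ∃ γ ∈ C, β < γ ∧ γ < δ) → δ ∈ C) ∧
  (∀ β, β < omega1 → ∃ γ ∈ C, β < γ)

/-- `S` is a stationary subset of `ω₁`. -/
def IsStatIn (S : Set Ordinal.{0}) : Prop :=
  S ⊆ Set.Iio omega1 ∧ ∀ C, IsClubIn C → (S ∩ C).Nonempty

open scoped Classical in
/-- `|{k < n : α k ∈ A}| / n` as a real number. -/
noncomputable def hitRatio (α : ℕ → Ordinal.{0}) (A : Set Ordinal.{0}) (n : ℕ) : ℝ :=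
  ((Finset.range n).filter (fun k => α k ∈ A)).card / n

/-- `α` assigns to each `δ ∈ S` a strictly increasing sequence cofinal in `δ`. -/
def GoodSeq (S : Set Ordinal.{0}) (α : Ordinal.{0} → ℕ → Ordinal.{0}) : Prop :=
  ∀ δ ∈ S, StrictMono (α δ) ∧ (∀ n, α δ n < δ) ∧ (∀ β < δ, ∃ n, β < α δ n)

/-- The principle `♣_S^{inf ≥ a}`. -/
def ClubSuitInf (S : Set Ordinal.{0}) (a : ℝ) : Prop :=
  ∃ α : Ordinal.{0} → ℕ → Ordinal.{0}, GoodSeq S α ∧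
    ∀ A : Set Ordinal.{0}, A ⊆ Set.Iio omega1 → ¬ A.Countable →
      ∃ δ ∈ S, a ≤ Filter.liminf (hitRatio (α δ) A) Filter.atTop

/-- The principle `♣_S^{sup ≥ a}`. -/
def ClubSuitSup (S : Set Ordinal.{0}) (a : ℝ) : Prop :=
  ∃ α : Ordinal.{0} → ℕ → Ordinal.{0}, GoodSeq S α ∧
    ∀ A : Set Ordinal.{0}, A ⊆ Set.Iio omega1 → ¬ A.Countable →
      ∃ δ ∈ S, a ≤ Filter.limsup (hitRatio (α δ) A) Filter.atTop

/-- The diamond principle `◊` on `ω₁`. -/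
def DiamondOmega1 : Prop :=
  ∃ B : Ordinal.{0} → Set Ordinal.{0}, (∀ δ ∈ limOmega1, B δ ⊆ Set.Iio δ) ∧
    ∀ A : Set Ordinal.{0}, A ⊆ Set.Iio omega1 →
      IsStatIn {δ ∈ limOmega1 | A ∩ Set.Iio δ = B δ}


open scoped Ordinal

lemma omega1_isLimit : Order.IsSuccLimit omega1 :=
  Cardinal.isSuccLimit_ord (by simpa using Cardinal.aleph0_le_aleph 1)

lemma omega1_eq : omega1 = ω_ 1 := Cardinal.ord_aleph 1

lemma Ordinal.iSup_sequence_lt_omega1 (f : ℕ → Ordinal.{0}) (h : ∀ n, f n < omega1) :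
    iSup f < omega1 := by
  rw [omega1_eq] at *; exact Ordinal.iSup_lt_omega_one h

lemma one_lt_omega1 : 1 < omega1 := by
  rw [omega1_eq]; exact Ordinal.one_lt_omega0.trans Ordinal.omega0_lt_omega_one

lemma countable_Iio_of_lt_omega1 {b : Ordinal.{0}} (hb : b < omega1) :
    (Set.Iio b).Countable := by
  rw [Cardinal.countable_iff_lt_aleph_one, Ordinal.mk_Iio_ordinal]
  have h1 : b.card < Cardinal.aleph 1 := Cardinal.lt_ord.mp hb
  have := Cardinal.lift_lt.{0,1}.mpr h1
  rwa [Cardinal.lift_aleph, Ordinal.lift_one] at this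

lemma countable_of_bdd {X : Set Ordinal.{0}} {b : Ordinal.{0}} (hb : b < omega1)
    (h : ∀ x ∈ X, x < b) : X.Countable :=
  (countable_Iio_of_lt_omega1 hb).mono (fun x hx => h x hx)

lemma bdd_of_countable {X : Set Ordinal.{0}} (hX : X ⊆ Set.Iio omega1)
    (hc : X.Countable) : ∃ b, b < omega1 ∧ ∀ x ∈ X, x < b := by
  rcases X.eq_empty_or_nonempty with rfl | hne
  · exact ⟨1, one_lt_omega1, by simp⟩
  · obtain ⟨g, hg⟩ := Set.Countable.exists_eq_range hc hne
    refine ⟨iSup (fun n => g n + 1), ?_, ?_⟩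
    · apply Ordinal.iSup_sequence_lt_omega1
      intro n
      have hmem : g n ∈ X := by rw [hg]; exact ⟨n, rfl⟩
      have h2 := hX hmem
      have hlim : Order.IsSuccLimit omega1 := Cardinal.isSuccLimit_ord (by simpa using Cardinal.aleph0_le_aleph 1)
      rw [Ordinal.add_one_eq_succ]
      exact hlim.succ_lt h2
    · intro x hx
      rw [hg] at hx
      obtain ⟨n, rfl⟩ := hx
      calc g n < g n + 1 := lt_add_one _
        _ ≤ _ := le_ciSup (Ordinal.bddAbove_range _) n

lemma unbounded_of_uncountable {X : Set Ordinal.{0}} (hX : X ⊆ Set.Iio omega1)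
    (hc : ¬ X.Countable) : ∀ b < omega1, ∃ x ∈ X, b < x := by
  intro b hb
  by_contra hcon
  push_neg at hcon
  have hlim : Order.IsSuccLimit omega1 := Cardinal.isSuccLimit_ord (by simpa using Cardinal.aleph0_le_aleph 1)
  have : b + 1 < omega1 := by rw [Ordinal.add_one_eq_succ]; exact hlim.succ_lt hb
  exact hc (countable_of_bdd this (fun x hx => lt_of_le_of_lt (hcon x hx) (lt_add_one b)))

lemma uncountable_of_unbounded {X : Set Ordinal.{0}} (hX : X ⊆ Set.Iio omega1)
    (hu : ∀ b < omega1, ∃ x ∈ X, b < x) : ¬ X.Countable := by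
  intro hc
  obtain ⟨b, hb, hbd⟩ := bdd_of_countable hX hc
  obtain ⟨x, hx, hbx⟩ := hu b hb
  exact absurd (hbd x hx) (not_lt.mpr hbx.le)

lemma exists_cofinal_seq {δ : Ordinal.{0}} (hδ : δ ∈ limOmega1) :
    ∃ g : ℕ → Ordinal.{0}, StrictMono g ∧ (∀ n, g n < δ) ∧ ∀ β < δ, ∃ n, β < g n := by
  obtain ⟨hδ1, hδ2⟩ := hδ
  obtain ⟨g0, hg0⟩ := Set.Countable.exists_eq_range
    (countable_Iio_of_lt_omega1 hδ1) ⟨0, hδ2.pos⟩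
  have hg0lt : ∀ n, g0 n < δ := by
    intro n
    have : g0 n ∈ Set.Iio δ := by rw [hg0]; exact ⟨n, rfl⟩
    exact this
  set b : ℕ → Ordinal.{0} := fun n => Nat.rec (g0 0) (fun n ih => max (ih + 1) (g0 (n+1))) n with hbdef
  have hblt : ∀ n, b n < δ := by
    intro n
    induction n with
    | zero => exact hg0lt 0
    | succ n ih =>
      have h1 : b n + 1 < δ := by
        rw [Ordinal.add_one_eq_succ]; exact hδ2.succ_lt ih
      exact max_lt h1 (hg0lt (n+1))
  have hmono : StrictMono b := by
    apply strictMono_nat_of_lt_succ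
    intro n
    exact lt_of_lt_of_le (lt_add_one _) (le_max_left _ _)
  have hle : ∀ n, g0 n ≤ b n := by
    intro n
    cases n with
    | zero => exact le_rfl
    | succ n => exact le_max_right _ _
  refine ⟨b, hmono, hblt, fun β hβ => ?_⟩
  have : β ∈ Set.Iio δ := hβ
  rw [hg0] at this
  obtain ⟨k, hk⟩ := this
  exact ⟨k + 1, lt_of_le_of_lt (hk ▸ hle k) (hmono (lt_add_one k))⟩


lemma hitRatio_nonneg (α : ℕ → Ordinal.{0}) (A : Set Ordinal.{0}) (n : ℕ) :
    0 ≤ hitRatio α A n := by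
  unfold hitRatio; positivity

lemma hitRatio_le_one (α : ℕ → Ordinal.{0}) (A : Set Ordinal.{0}) (n : ℕ) :
    hitRatio α A n ≤ 1 := by
  classical
  unfold hitRatio
  rcases Nat.eq_zero_or_pos n with rfl | hn
  · simp
  · rw [div_le_one (by exact_mod_cast hn)]
    exact_mod_cast (Finset.card_filter_le _ _).trans (by simp)

lemma hitRatio_mono (α : ℕ → Ordinal.{0}) {A B : Set Ordinal.{0}} (h : A ⊆ B) (n : ℕ) :
    hitRatio α A n ≤ hitRatio α B n := by
  classical
  unfold hitRatio
  rcases Nat.eq_zero_or_pos n with rfl | hn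
  · simp
  · rw [div_le_div_iff_of_pos_right (by exact_mod_cast hn)]
    exact_mod_cast Finset.card_le_card
      (Finset.monotone_filter_right _ (fun k _ hk => h hk))

lemma hr_bdd (α : ℕ → Ordinal.{0}) (A : Set Ordinal.{0}) :
    IsBoundedUnder (· ≥ ·) atTop (hitRatio α A) :=
  isBoundedUnder_of ⟨0, fun n => hitRatio_nonneg α A n⟩

lemma hr_bdd' (α : ℕ → Ordinal.{0}) (A : Set Ordinal.{0}) :
    IsBoundedUnder (· ≤ ·) atTop (hitRatio α A) :=
  isBoundedUnder_of ⟨1, fun n => hitRatio_le_one α A n⟩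

lemma hr_cobdd (α : ℕ → Ordinal.{0}) (A : Set Ordinal.{0}) :
    IsCoboundedUnder (· ≥ ·) atTop (hitRatio α A) :=
  (hr_bdd' α A).isCoboundedUnder_ge

lemma liminf_hitRatio_mono (α : ℕ → Ordinal.{0}) {A B : Set Ordinal.{0}} (h : A ⊆ B) :
    liminf (hitRatio α A) atTop ≤ liminf (hitRatio α B) atTop :=
  liminf_le_liminf (Eventually.of_forall (hitRatio_mono α h)) (hr_bdd α A) (hr_cobdd α B)

lemma infinite_hits {α : ℕ → Ordinal.{0}} {A : Set Ordinal.{0}} {a : ℝ} (ha0 : 0 < a)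
    (hlim : a ≤ liminf (hitRatio α A) atTop) : {k : ℕ | α k ∈ A}.Infinite := by
  classical
  by_contra hinf
  rw [Set.not_infinite] at hinf
  obtain ⟨N, hN⟩ : ∃ N : ℕ, ∀ k, α k ∈ A → k < N := by
    obtain ⟨N, hN⟩ := hinf.bddAbove
    exact ⟨N + 1, fun k hk => Nat.lt_succ_of_le (hN hk)⟩
  have hb : ∀ n, hitRatio α A n ≤ (N : ℝ) / n := by
    intro n
    rcases Nat.eq_zero_or_pos n with rfl | hn
    · simp [hitRatio]
    · unfold hitRatio
      rw [div_le_div_iff_of_pos_right (by exact_mod_cast hn : (0:ℝ) < n)]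
      have : ((Finset.range n).filter (fun k => α k ∈ A)) ⊆ Finset.range N := by
        intro k hk
        simp only [Finset.mem_filter, Finset.mem_range] at hk ⊢
        exact hN k hk.2
      exact_mod_cast (Finset.card_le_card this).trans (by simp)
  have h0 : Tendsto (hitRatio α A) atTop (nhds 0) :=
    squeeze_zero (fun n => hitRatio_nonneg α A n) hb (tendsto_const_div_atTop_nhds_zero_nat (N : ℝ))
  rw [h0.liminf_eq] at hlim
  exact absurd hlim (not_le.mpr ha0)

lemma liminf_comp_ge {u : ℕ → ℝ} (hlb : ∀ n, 0 ≤ u n) (hub : ∀ n, u n ≤ 1)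
    {φ : ℕ → ℕ} (hφ : Tendsto φ atTop atTop) :
    liminf u atTop ≤ liminf (u ∘ φ) atTop := by
  rw [liminf_comp]
  have : NeBot (map φ atTop) := map_neBot
  exact liminf_le_liminf_of_le hφ (isBoundedUnder_of ⟨0, hlb⟩)
    (IsBoundedUnder.isCoboundedUnder_ge (by
      refine ⟨1, ?_⟩
      rw [eventually_map, eventually_map]
      exact Eventually.of_forall (fun n => hub (φ n))))

/-- if δ (a limit) is guessed for A with a sequence good at δ, then A ∩ δ is cofinal in δ -/
lemma acc_of_guess {α : ℕ → Ordinal.{0}} {A : Set Ordinal.{0}} {a : ℝ} {δ : Ordinal.{0}}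
    (ha0 : 0 < a) (hmono : StrictMono α) (hlt : ∀ n, α n < δ) (hcof : ∀ β < δ, ∃ n, β < α n)
    (hlim : a ≤ liminf (hitRatio α A) atTop) :
    ∀ β < δ, ∃ x ∈ A, β < x ∧ x < δ := by
  intro β hβ
  obtain ⟨n, hn⟩ := hcof β hβ
  obtain ⟨k, hk, hkn⟩ := (infinite_hits ha0 hlim).exists_gt n
  exact ⟨α k, hk, lt_of_lt_of_le hn (hmono.monotone hkn.le), hlt k⟩

lemma stat_of_guessing {S' : Set Ordinal.{0}} (hS' : S' ⊆ limOmega1)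
    {β : Ordinal.{0} → ℕ → Ordinal.{0}} (hgood : GoodSeq S' β) {a : ℝ} (ha0 : 0 < a)
    (hguess : ∀ A : Set Ordinal.{0}, A ⊆ Set.Iio omega1 → ¬ A.Countable →
      ∃ δ ∈ S', a ≤ liminf (hitRatio (β δ) A) atTop) : IsStatIn S' := by
  refine ⟨fun x hx => (hS' hx).1, fun C hC => ?_⟩
  have hCu : ¬ C.Countable := uncountable_of_unbounded hC.1 (fun b hb => hC.2.2 b hb)
  obtain ⟨δ, hδS, hδg⟩ := hguess C hC.1 hCu
  obtain ⟨hm, hlt, hcof⟩ := hgood δ hδS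
  have hacc := acc_of_guess ha0 hm hlt hcof hδg
  exact ⟨δ, hδS, hC.2.1 δ (hS' hδS).1 (hS' hδS).2 (fun b hb => by
    obtain ⟨x, hx, h1, h2⟩ := hacc b hb; exact ⟨x, hx, h1, h2⟩)⟩

lemma thin_subset {C B : Set Ordinal.{0}} (hC : IsClubIn C) (hB : B ⊆ Set.Iio omega1)
    (hBu : ¬ B.Countable) :
    ∃ A' : Set Ordinal.{0}, A' ⊆ B ∧ ¬ A'.Countable ∧
      ∀ δ, δ < omega1 → Order.IsSuccLimit δ → (∀ b < δ, ∃ x ∈ A', b < x ∧ x < δ) → δ ∈ C := by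
  refine ⟨{x | x ∈ B ∧ ∃ c ∈ C, c < x ∧ ∀ y ∈ B, y < x → y ≤ c}, fun x hx => hx.1, ?_, ?_⟩
  · apply uncountable_of_unbounded (fun x hx => hB hx.1)
    intro b hb
    obtain ⟨c, hcC, hbc⟩ := hC.2.2 b hb
    have hT : {x | x ∈ B ∧ c < x}.Nonempty := by
      obtain ⟨x, hx1, hx2⟩ := unbounded_of_uncountable hB hBu c (hC.1 hcC)
      exact ⟨x, hx1, hx2⟩
    set x := sInf {x | x ∈ B ∧ c < x} with hxdef
    have hxmem : x ∈ B ∧ c < x := csInf_mem hT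
    refine ⟨x, ⟨hxmem.1, c, hcC, hxmem.2, ?_⟩, hbc.trans hxmem.2⟩
    intro y hy hyx
    by_contra hcy
    push_neg at hcy
    exact absurd hyx (not_lt.mpr (csInf_le' ⟨hy, hcy⟩))
  · intro δ hδ1 hδ2 hacc
    apply hC.2.1 δ hδ1 hδ2
    intro b hb
    obtain ⟨x₁, hx₁, hbx₁, hx₁δ⟩ := hacc b hb
    obtain ⟨x₂, hx₂, hx₁x₂, hx₂δ⟩ := hacc x₁ hx₁δ
    obtain ⟨c, hcC, hcx₂, hcbd⟩ := hx₂.2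
    exact ⟨c, hcC, lt_of_lt_of_le hbx₁ (hcbd x₁ hx₁.1 hx₁x₂), hcx₂.trans hx₂δ⟩

lemma key_transfer {a : ℝ} (ha0 : 0 < a)
    {S S₂ : Set Ordinal.{0}} (hS : S ⊆ limOmega1) (hS₂ : S₂ ⊆ S)
    {α : Ordinal.{0} → ℕ → Ordinal.{0}} (hgood : GoodSeq S α)
    (hguess : ∀ A : Set Ordinal.{0}, A ⊆ Set.Iio omega1 → ¬ A.Countable →
      ∃ δ ∈ S, a ≤ liminf (hitRatio (α δ) A) atTop)
    {A₁ : Set Ordinal.{0}} (hA₁ : A₁ ⊆ Set.Iio omega1) (hA₁u : ¬ A₁.Countable)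
    (hbad : ∀ δ ∈ S, a ≤ liminf (hitRatio (α δ) A₁) atTop → δ ∈ S₂) :
    ∃ β : Ordinal.{0} → ℕ → Ordinal.{0}, GoodSeq S₂ β ∧
      ∀ A : Set Ordinal.{0}, A ⊆ Set.Iio omega1 → ¬ A.Countable →
        ∃ δ ∈ S₂, a ≤ liminf (hitRatio (β δ) A) atTop := by
  classical
  -- the enumeration f of A₁ (on Iio omega1)
  set s : Set Ordinal.{0} := A₁ ∪ Set.Ici omega1 with hsdef
  have hs : ¬ BddAbove s := by
    rintro ⟨b, hb⟩
    have hmem : max omega1 b + 1 ∈ s :=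
      Or.inr (Set.mem_Ici.mpr ((le_max_left _ _).trans (le_of_lt (lt_add_one _))))
    exact absurd (hb hmem) (not_le.mpr (lt_of_le_of_lt (le_max_right omega1 b) (lt_add_one _)))
  set f : Ordinal.{0} → Ordinal.{0} := Ordinal.enumOrd s with hfdef
  have hfmono : StrictMono f := Ordinal.enumOrd_strictMono hs
  have hfinj : Function.Injective f := hfmono.injective
  have hfself : ∀ ξ, ξ ≤ f ξ := fun ξ => Ordinal.le_enumOrd_self hs
  have hflt : ∀ ξ < omega1, f ξ < omega1 := by
    intro ξ hξ
    induction ξ using Ordinal.induction with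
    | _ ξ IH =>
      obtain ⟨b, hb, hbd⟩ := bdd_of_countable
        (X := f '' (Set.Iio ξ)) (by rintro x ⟨η, hη, rfl⟩; exact IH η hη (hη.trans hξ))
        ((countable_Iio_of_lt_omega1 hξ).image f)
      obtain ⟨x, hxA, hbx⟩ := unbounded_of_uncountable hA₁ hA₁u b hb
      have : f ξ ≤ x := Ordinal.enumOrd_le_of_forall_lt (Or.inl hxA)
        (fun η hη => lt_trans (hbd _ ⟨η, hη, rfl⟩) hbx)
      exact lt_of_le_of_lt this (hA₁ hxA)
  have hfA₁ : ∀ ξ < omega1, f ξ ∈ A₁ := by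
    intro ξ hξ
    rcases Ordinal.enumOrd_mem hs ξ with h | h
    · exact h
    · exact absurd (hflt ξ hξ) (not_lt.mpr h)
  -- inverse of f
  set finv : Ordinal.{0} → Ordinal.{0} := fun y => sInf {ξ | f ξ = y} with hfinvdef
  have hfinvf : ∀ ξ, finv (f ξ) = ξ := by
    intro ξ
    have : {η | f η = f ξ} = {ξ} := by
      ext η; simp [hfinj.eq_iff]
    rw [hfinvdef]; simp only [this, csInf_singleton]
  -- the range R
  set R : Set Ordinal.{0} := f '' (Set.Iio omega1) with hRdef
  have hRA₁ : R ⊆ A₁ := by rintro y ⟨ξ, hξ, rfl⟩; exact hfA₁ ξ hξ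
  have hRω : R ⊆ Set.Iio omega1 := by rintro y ⟨ξ, hξ, rfl⟩; exact hflt ξ hξ
  -- the club of closure points of f
  set Chat : Set Ordinal.{0} := {δ | δ < omega1 ∧ 0 < δ ∧ ∀ ξ < δ, f ξ < δ} with hChatdef
  have hChat : IsClubIn Chat := by
    refine ⟨fun x hx => hx.1, ?_, ?_⟩
    · intro δ hδ1 hδ2 happ
      refine ⟨hδ1, hδ2.pos, fun ξ hξ => ?_⟩
      obtain ⟨γ, hγC, hξγ, hγδ⟩ := happ ξ hξ
      exact lt_trans (lt_of_lt_of_le (hγC.2.2 ξ hξγ) le_rfl) hγδ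
    · intro b hb
      have key : ∀ x, x < omega1 → ∃ y, y < omega1 ∧ x < y ∧ ∀ ξ < x, f ξ < y := by
        intro x hx
        obtain ⟨b₀, hb₀, hb₀d⟩ := bdd_of_countable
          (X := f '' (Set.Iio x)) (by rintro z ⟨η, hη, rfl⟩; exact hflt η (hη.trans hx))
          ((countable_Iio_of_lt_omega1 hx).image f)
        have hx1 : x + 1 < omega1 := by
          rw [Ordinal.add_one_eq_succ]; exact omega1_isLimit.succ_lt hx
        exact ⟨max (x+1) b₀, max_lt hx1 hb₀, lt_of_lt_of_le (lt_add_one x) (le_max_left _ _),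
          fun ξ hξ => lt_of_lt_of_le (hb₀d _ ⟨ξ, hξ, rfl⟩) (le_max_right _ _)⟩
      have hb1 : b + 1 < omega1 := by
        rw [Ordinal.add_one_eq_succ]; exact omega1_isLimit.succ_lt hb
      set c : ℕ → {x : Ordinal.{0} // x < omega1} :=
        fun n => Nat.rec ⟨b+1, hb1⟩
          (fun _ ih => ⟨(key ih.1 ih.2).choose, (key ih.1 ih.2).choose_spec.1⟩) n with hcdef
      have hcmono : ∀ n, (c n).1 < (c (n+1)).1 := by
        intro n
        exact (key (c n).1 (c n).2).choose_spec.2.1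
      have hcf : ∀ n, ∀ ξ < (c n).1, f ξ < (c (n+1)).1 := by
        intro n
        exact (key (c n).1 (c n).2).choose_spec.2.2
      set δ : Ordinal.{0} := iSup (fun n => (c n).1) with hδdef
      have hδω : δ < omega1 := Ordinal.iSup_sequence_lt_omega1 _ (fun n => (c n).2)
      have hcle : ∀ n, (c n).1 ≤ δ := fun n => le_ciSup (Ordinal.bddAbove_range _) n
      refine ⟨δ, ⟨hδω, ?_, ?_⟩, lt_of_lt_of_le (lt_add_one b) (hcle 0)⟩
      · exact lt_of_lt_of_le (lt_of_le_of_lt (zero_le : (0 : Ordinal.{0}) ≤ b) (lt_add_one b)) (hcle 0)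
      · intro ξ hξ
        obtain ⟨n, hn⟩ : ∃ n, ξ < (c n).1 := by
          rw [hδdef] at hξ
          exact (lt_ciSup_iff (Ordinal.bddAbove_range _)).mp hξ
        exact lt_of_lt_of_le (hcf n ξ hn) (hcle (n+1))
  -- definition of β
  have hS₂lim : ∀ δ ∈ S₂, δ ∈ limOmega1 := fun δ h => hS (hS₂ h)
  set pb : Ordinal.{0} → ℕ → Ordinal.{0} :=
    fun δ n => finv (α δ (Nat.nth (fun k => α δ k ∈ R) n)) with hpbdef
  have hex : ∀ δ ∈ S₂, ∃ g : ℕ → Ordinal.{0},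
      (StrictMono g ∧ (∀ n, g n < δ) ∧ ∀ b < δ, ∃ n, b < g n) ∧
      (({k : ℕ | α δ k ∈ R}.Infinite ∧ ∀ ξ < δ, f ξ < δ) → g = pb δ) := by
    intro δ hδ
    by_cases hgd : {k : ℕ | α δ k ∈ R}.Infinite ∧ ∀ ξ < δ, f ξ < δ
    · obtain ⟨hαm, hαlt, hαcof⟩ := hgood δ (hS₂ hδ)
      obtain ⟨hKinf, hcl⟩ := hgd
      have hmem : ∀ n, α δ (Nat.nth (fun k => α δ k ∈ R) n) ∈ R :=
        fun n => Nat.nth_mem_of_infinite hKinf n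
      refine ⟨pb δ, ⟨?_, ?_, ?_⟩, fun _ => rfl⟩
      · intro n m hnm
        obtain ⟨x1, hx1, he1⟩ := hmem n
        obtain ⟨x2, hx2, he2⟩ := hmem m
        rw [hpbdef]
        simp only []
        rw [← he1, ← he2, hfinvf, hfinvf]
        have : α δ (Nat.nth (fun k => α δ k ∈ R) n) < α δ (Nat.nth (fun k => α δ k ∈ R) m) :=
          hαm ((Nat.nth_lt_nth hKinf).mpr hnm)
        rw [← he1, ← he2] at this
        exact hfmono.lt_iff_lt.mp this
      · intro n
        calc pb δ n ≤ f (pb δ n) := hfself _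
          _ = α δ (Nat.nth (fun k => α δ k ∈ R) n) := by
              obtain ⟨x, hx, he⟩ := hmem n
              rw [hpbdef]; simp only []; rw [← he, hfinvf]
          _ < δ := hαlt _
      · intro b hbδ
        obtain ⟨m, hm⟩ := hαcof (f b) (hcl b hbδ)
        refine ⟨m, ?_⟩
        by_contra hcon
        push_neg at hcon
        have h1 : f (pb δ m) = α δ (Nat.nth (fun k => α δ k ∈ R) m) := by
          obtain ⟨x, hx, he⟩ := hmem m
          rw [hpbdef]; simp only []; rw [← he, hfinvf]
        have h2 : α δ (Nat.nth (fun k => α δ k ∈ R) m) ≤ f b := by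
          rw [← h1]; exact hfmono.monotone hcon
        have h3 : α δ m ≤ α δ (Nat.nth (fun k => α δ k ∈ R) m) :=
          hαm.monotone (Nat.le_nth (fun hf => (hKinf hf).elim))
        exact absurd hm (not_lt.mpr (h3.trans h2))
    · obtain ⟨g, hg1, hg2, hg3⟩ := exists_cofinal_seq (hS₂lim δ hδ)
      exact ⟨g, ⟨hg1, hg2, hg3⟩, fun h => absurd h hgd⟩
  choose! β hβ1 hβ2 using hex
  refine ⟨β, fun δ hδ => hβ1 δ hδ, ?_⟩
  intro A hA hAu
  -- push A into A₁ via f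
  set B : Set Ordinal.{0} := f '' A with hBdef
  have hBR : B ⊆ R := Set.image_mono hA
  have hBu : ¬ B.Countable := by
    intro hc
    exact hAu ((hc.preimage hfinj).mono (fun x hx => (⟨x, hx, rfl⟩ : f x ∈ B)))
  obtain ⟨A', hA'B, hA'u, hA'acc⟩ := thin_subset hChat (hBR.trans hRω) hBu
  obtain ⟨δ, hδS, hδg⟩ := hguess A' ((hA'B.trans hBR).trans hRω) hA'u
  obtain ⟨hαm, hαlt, hαcof⟩ := hgood δ hδS
  have hδS₂ : δ ∈ S₂ := by
    apply hbad δ hδS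
    exact le_trans hδg (liminf_hitRatio_mono (α δ) ((hA'B.trans hBR).trans hRA₁))
  have hδChat : δ ∈ Chat := hA'acc δ (hS hδS).1 (hS hδS).2
    (acc_of_guess ha0 hαm hαlt hαcof hδg)
  have hKinf : {k : ℕ | α δ k ∈ R}.Infinite :=
    ((infinite_hits ha0 hδg).mono (fun k hk => (hA'B.trans hBR) hk))
  have hβδ : β δ = pb δ := hβ2 δ hδS₂ ⟨hKinf, hδChat.2.2⟩
  refine ⟨δ, hδS₂, ?_⟩
  -- the transfer inequality
  set p : ℕ → Prop := fun k => α δ k ∈ R with hpdef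
  set φ : ℕ → ℕ := fun n => Nat.nth p (n-1) + 1 with hφdef
  have hnth_ge : ∀ n, n ≤ Nat.nth p n :=
    fun n => Nat.le_nth (fun hf => (hKinf hf).elim)
  have hφtend : Tendsto φ atTop atTop := by
    refine tendsto_atTop_mono' atTop ?_ tendsto_id
    filter_upwards [eventually_ge_atTop 1] with n hn
    show (n : ℕ) ≤ φ n
    calc (n : ℕ) = (n-1) + 1 := (Nat.succ_pred_eq_of_pos hn).symm
      _ ≤ Nat.nth p (n-1) + 1 := by exact Nat.succ_le_succ (hnth_ge _)
  have hpoint : ∀ n : ℕ, 1 ≤ n → (hitRatio (α δ) A' ∘ φ) n ≤ hitRatio (β δ) A n := by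
    intro n hn
    obtain ⟨m, rfl⟩ : ∃ m, n = m + 1 := ⟨n - 1, (Nat.succ_pred_eq_of_pos hn).symm⟩
    have hφval : φ (m+1) = Nat.nth p m + 1 := by rw [hφdef]; simp
    rw [Function.comp_apply, hφval]
    unfold hitRatio
    have hcard : ((Finset.range (Nat.nth p m + 1)).filter (fun k => α δ k ∈ A')).card ≤
        ((Finset.range (m + 1)).filter (fun j => β δ j ∈ A)).card := by
      apply Finset.card_le_card_of_injOn (fun k => Nat.count p k)
      · intro k hk
        simp only [Finset.coe_filter, Set.mem_setOf_eq, Finset.mem_coe, Finset.mem_filter, Finset.mem_range] at hk ⊢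
        have hpk : p k := (hA'B.trans hBR) hk.2
        constructor
        · exact Nat.lt_succ_of_le (Nat.le_nth_of_count_le (Nat.lt_succ_iff.mp hk.1))
        · have : β δ (Nat.count p k) = finv (α δ k) := by
            rw [hβδ, hpbdef]; simp only []; rw [Nat.nth_count hpk]
          rw [this]
          obtain ⟨x, hxA, hxe⟩ : α δ k ∈ B := hA'B hk.2
          rw [← hxe, hfinvf]
          exact hxA
      · intro k1 hk1 k2 hk2 he
        simp only [Finset.coe_filter, Set.mem_setOf_eq, Finset.mem_range] at hk1 hk2
        have hp1 : p k1 := (hA'B.trans hBR) hk1.2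
        have hp2 : p k2 := (hA'B.trans hBR) hk2.2
        have he' : Nat.count p k1 = Nat.count p k2 := he
        rw [← Nat.nth_count hp1, ← Nat.nth_count hp2, he']
    apply div_le_div₀ (by positivity) (by exact_mod_cast hcard) (by positivity)
    exact_mod_cast Nat.succ_le_succ (hnth_ge m)
  calc a ≤ liminf (hitRatio (α δ) A') atTop := hδg
    _ ≤ liminf (hitRatio (α δ) A' ∘ φ) atTop :=
        liminf_comp_ge (hitRatio_nonneg _ _) (hitRatio_le_one _ _) hφtend
    _ ≤ liminf (hitRatio (β δ) A) atTop := by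
        apply liminf_le_liminf
        · filter_upwards [eventually_ge_atTop 1] with n hn
          exact hpoint n hn
        · exact isBoundedUnder_of ⟨0, fun n => hitRatio_nonneg _ _ _⟩
        · exact hr_cobdd _ _

/-- Lemma 6.5: if `♣_S^{inf ≥ a}` holds and `S = S₁ ∪ S₂`, then the principle holds
on `S₁` or on `S₂` (where the principle on a non-stationary index set is taken to fail,
i.e. the successful part is moreover stationary). -/
theorem clubSuitInf_union (a : ℝ) (ha0 : 0 < a) (ha1 : a ≤ 1)
    (S S₁ S₂ : Set Ordinal.{0}) (hS : S ⊆ limOmega1) (hstat : IsStatIn S)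
    (hunion : S = S₁ ∪ S₂) (h : ClubSuitInf S a) :
    (IsStatIn S₁ ∧ ClubSuitInf S₁ a) ∨ (IsStatIn S₂ ∧ ClubSuitInf S₂ a) := by
  obtain ⟨α, hgood, hguess⟩ := h
  by_cases h1 : ∀ A : Set Ordinal.{0}, A ⊆ Set.Iio omega1 → ¬ A.Countable →
      ∃ δ ∈ S₁, a ≤ Filter.liminf (hitRatio (α δ) A) Filter.atTop
  · left
    have hS₁S : S₁ ⊆ S := hunion ▸ Set.subset_union_left
    have hgood₁ : GoodSeq S₁ α := fun δ hδ => hgood δ (hS₁S hδ)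
    exact ⟨stat_of_guessing (hS₁S.trans hS) hgood₁ ha0 h1, α, hgood₁, h1⟩
  · right
    push_neg at h1
    obtain ⟨A₁, hA₁, hA₁u, hbad⟩ := h1
    have hS₂S : S₂ ⊆ S := hunion ▸ Set.subset_union_right
    have hbad' : ∀ δ ∈ S, a ≤ Filter.liminf (hitRatio (α δ) A₁) Filter.atTop → δ ∈ S₂ := by
      intro δ hδ hg
      rcases (hunion ▸ hδ : δ ∈ S₁ ∪ S₂) with hm | hm
      · exact absurd hg (not_le.mpr (hbad δ hm))
      · exact hm
    obtain ⟨β, hgood₂, hguess₂⟩ := key_transfer ha0 hS hS₂S hgood hguess hA₁ hA₁u hbad'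
    exact ⟨stat_of_guessing (hS₂S.trans hS) hgood₂ ha0 hguess₂, β, hgood₂, hguess₂⟩
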